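/- Let I ⊂ F[x_1,...,x_d] be a zero-dimensional ideal, and for each 1 ≤ i ≤ d let ≺_i be an elimination order for x_i. Then the following are equivalent: (1) I has a unique monomial order quotient basis; (2) for any two monomial orders ≺ and ≺', the Gröbner éscaliers N_≺(I) and N_{≺'}(I) coincide; (3) the d Gröbner éscaliers N_{≺_1}(I), ..., N_{≺_d}(I) are all identical. -/

import Mathlib

open MvPolynomial

/-- A monomial order on exponent vectors `Fin d →₀ ℕ`: a linear order in which `0` (i.e. the
monomial `1`) is least and which is compatible with addition of exponents (multiplication of
monomials). -/
structure MonOrder (d : ℕ) where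
  toLinearOrder : LinearOrder (Fin d →₀ ℕ)
  zero_le : ∀ a, toLinearOrder.le 0 a
  add_le_add : ∀ a b c, toLinearOrder.le a b → toLinearOrder.le (a + c) (b + c)

/-- `α` is the exponent of the leading monomial of `f` w.r.t. the monomial order `o`. -/
def MonOrder.IsLM {d : ℕ} {F : Type*} [CommSemiring F] (o : MonOrder d)
    (f : MvPolynomial (Fin d) F) (α : Fin d →₀ ℕ) : Prop :=
  α ∈ f.support ∧ ∀ β ∈ f.support, o.toLinearOrder.le β α
/-- `o` is an elimination order for the variable `x_i`: `x_i` is greater than every monomial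
in the remaining variables. -/
def MonOrder.IsElimFor {d : ℕ} (o : MonOrder d) (i : Fin d) : Prop :=
  ∀ β : Fin d →₀ ℕ, β i = 0 → o.toLinearOrder.lt β (Finsupp.single i 1)
/-- The Gröbner éscalier of an ideal `I` w.r.t. a monomial order `o`: the monomials (exponent
vectors) not divisible by the leading monomial of any nonzero element of `I`. -/
def escalier {d : ℕ} {F : Type*} [CommSemiring F] (o : MonOrder d)
    (I : Ideal (MvPolynomial (Fin d) F)) : Set (Fin d →₀ ℕ) :=
  {m | ∀ f ∈ I, f ≠ 0 → ∀ α, o.IsLM f α → ¬ α ≤ m}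
/-- `O` (a set of exponent vectors) is a monomial order quotient basis for `I`: it is a finite
order ideal (lower set of exponents) whose monomials give an `F`-vector space basis of
`F[x]/I`. -/
def IsMOQB {d : ℕ} {F : Type*} [Field F] (I : Ideal (MvPolynomial (Fin d) F))
    (O : Set (Fin d →₀ ℕ)) : Prop :=
  O.Finite ∧ IsLowerSet O ∧
  LinearIndependent F (fun t : O => Ideal.Quotient.mk I (monomial (t : Fin d →₀ ℕ) (1 : F))) ∧
  Submodule.span F
    (Set.range fun t : O => Ideal.Quotient.mk I (monomial (t : Fin d →₀ ℕ) (1 : F))) = ⊤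

section Aux
variable {d : ℕ}

def ole (o : MonOrder d) (a b : Fin d →₀ ℕ) : Prop := o.toLinearOrder.le a b
def olt (o : MonOrder d) (a b : Fin d →₀ ℕ) : Prop := o.toLinearOrder.lt a b

lemma olt_iff {o : MonOrder d} {a b} : olt o a b ↔ ole o a b ∧ ¬ ole o b a :=
  o.toLinearOrder.lt_iff_le_not_ge a b

lemma ole_total (o : MonOrder d) (a b) : ole o a b ∨ ole o b a := o.toLinearOrder.le_total a b
lemma ole_refl (o : MonOrder d) (a) : ole o a a := o.toLinearOrder.le_refl a
lemma ole_trans {o : MonOrder d} {a b c} (h : ole o a b) (h' : ole o b c) : ole o a c :=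
  o.toLinearOrder.le_trans a b c h h'
lemma ole_antisymm {o : MonOrder d} {a b} (h : ole o a b) (h' : ole o b a) : a = b :=
  o.toLinearOrder.le_antisymm a b h h'

lemma olt_of_ole_ne {o : MonOrder d} {a b} (h : ole o a b) (hne : a ≠ b) : olt o a b :=
  olt_iff.2 ⟨h, fun h' => hne (ole_antisymm h h')⟩

lemma olt_of_olt_ole {o : MonOrder d} {a b c} (h : olt o a b) (h' : ole o b c) : olt o a c := by
  rcases olt_iff.1 h with ⟨h1, h2⟩
  exact olt_iff.2 ⟨ole_trans h1 h', fun hc => h2 (ole_trans h' hc)⟩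

lemma ole_of_le {o : MonOrder d} {a b : Fin d →₀ ℕ} (h : a ≤ b) : ole o a b := by
  obtain ⟨c, rfl⟩ := le_iff_exists_add.1 h
  have := o.add_le_add 0 c a (o.zero_le c)
  rw [zero_add] at this
  rw [add_comm] at this; exact this

lemma oadd_le_add {o : MonOrder d} {a b : Fin d →₀ ℕ} (h : ole o a b) (c) :
    ole o (a + c) (b + c) := o.add_le_add a b c h

lemma oadd_lt_add {o : MonOrder d} {a b : Fin d →₀ ℕ} (h : olt o a b) (c) :
    olt o (a + c) (b + c) := by
  refine olt_of_ole_ne (oadd_le_add (olt_iff.1 h).1 c) (fun hc => ?_)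
  have : a = b := add_right_cancel hc
  exact (olt_iff.1 h).2 (this ▸ ole_refl o b)

/-- elimination order compares `x_i`-degrees first -/
lemma olt_of_apply_lt {o : MonOrder d} {i : Fin d} (h : o.IsElimFor i)
    {a b : Fin d →₀ ℕ} (hi : a i < b i) : olt o a b := by
  classical
  set a' : Fin d →₀ ℕ := a - Finsupp.single i (a i) with ha'
  have ha'i : a' i = 0 := by simp [ha']
  have h1 : olt o a' (Finsupp.single i 1) := h a' ha'i
  have h2 : olt o (a' + Finsupp.single i (a i)) (Finsupp.single i 1 + Finsupp.single i (a i)) :=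
    oadd_lt_add h1 _
  have e1 : a' + Finsupp.single i (a i) = a := by
    ext j
    by_cases hj : j = i
    · subst hj; simp [ha']
    · simp [ha', Finsupp.single_apply, Ne.symm hj, hj]
  have e2 : Finsupp.single i 1 + Finsupp.single i (a i) = Finsupp.single i (a i + 1) := by
    rw [← Finsupp.single_add, add_comm]
  rw [e1, e2] at h2
  have h3 : ole o (Finsupp.single i (a i + 1)) b :=
    ole_of_le (Finsupp.single_le_iff.2 hi)
  exact olt_of_olt_ole h2 h3

variable {F : Type*} [CommSemiring F]

lemma exists_isLM (o : MonOrder d) {f : MvPolynomial (Fin d) F} (hf : f ≠ 0) :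
    ∃ α, o.IsLM f α := by
  classical
  letI := o.toLinearOrder
  have hne : f.support.Nonempty := MvPolynomial.support_nonempty.2 hf
  obtain ⟨α, hmem, hmax⟩ := f.support.exists_max_image id hne
  exact ⟨α, hmem, fun β hβ => hmax β hβ⟩

/-- well-foundedness of a monomial order, via Dickson's lemma -/
lemma olt_irrefl (o : MonOrder d) (a) : ¬ olt o a a := fun h =>
  (olt_iff.1 h).2 (olt_iff.1 h).1

lemma olt_trans {o : MonOrder d} {a b c} (h : olt o a b) (h' : olt o b c) : olt o a c :=
  olt_of_olt_ole h (olt_iff.1 h').1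

lemma olt_wf (o : MonOrder d) : WellFounded (olt o) := by
  haveI : IsStrictOrder (Fin d →₀ ℕ) (olt o) :=
    { irrefl := olt_irrefl o, trans := fun _ _ _ => olt_trans }
  rw [RelEmbedding.wellFounded_iff_isEmpty]
  constructor
  intro g
  obtain ⟨m, n, hmn, hle⟩ := wellQuasiOrdered_le (α := Fin d →₀ ℕ) (fun k => g k)
  have h1 : olt o (g n) (g m) := g.map_rel_iff.2 hmn
  exact (olt_iff.1 h1).2 (ole_of_le hle)

end Aux

section Esc
variable {d : ℕ} {F : Type*} [CommSemiring F] {o : MonOrder d}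
  {I : Ideal (MvPolynomial (Fin d) F)}

lemma isLM_notMem_escalier {f : MvPolynomial (Fin d) F} (hfI : f ∈ I) (hf : f ≠ 0)
    {α} (hα : o.IsLM f α) : α ∉ escalier o I :=
  fun hmem => hmem f hfI hf α hα le_rfl

lemma escalier_lowerSet : IsLowerSet (escalier o I) := by
  intro a b hba ha f hfI hf α hα hle
  exact ha f hfI hf α hα (hle.trans hba)

lemma not_mem_escalier_iff {m : Fin d →₀ ℕ} :
    m ∉ escalier o I ↔ ∃ f ∈ I, f ≠ 0 ∧ ∃ α, o.IsLM f α ∧ α ≤ m := by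
  simp only [escalier, Set.mem_setOf_eq]
  push_neg
  tauto

end Esc

section LemA
variable {d : ℕ} {F : Type*} [Field F] {I : Ideal (MvPolynomial (Fin d) F)}

lemma smul_mk_monomial (c : F) (β : Fin d →₀ ℕ) :
    c • Ideal.Quotient.mk I (monomial β (1 : F)) = Ideal.Quotient.mk I (monomial β c) := by
  have := map_smul (Ideal.Quotient.mkₐ F I).toLinearMap c (monomial β (1 : F))
  simp only [AlgHom.toLinearMap_apply, Ideal.Quotient.mkₐ_eq_mk] at this
  rw [← this, MvPolynomial.smul_monomial, smul_eq_mul, mul_one]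

lemma mk_eq_sum_smul (h : MvPolynomial (Fin d) F) :
    Ideal.Quotient.mk I h =
      ∑ β ∈ h.support, coeff β h • Ideal.Quotient.mk I (monomial β (1 : F)) := by
  conv_lhs => rw [← MvPolynomial.support_sum_monomial_coeff h]
  rw [map_sum]
  exact Finset.sum_congr rfl fun β _ => (smul_mk_monomial _ _).symm

/-- a polynomial in `I` supported on a linearly independent set of monomials is zero -/
lemma eq_zero_of_supp_subset {O : Set (Fin d →₀ ℕ)}
    (hLI : LinearIndependent F
      (fun t : O => Ideal.Quotient.mk I (monomial (t : Fin d →₀ ℕ) (1 : F))))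
    {h : MvPolynomial (Fin d) F} (hsupp : ↑h.support ⊆ O) (hI : h ∈ I) : h = 0 := by
  classical
  have key := linearIndependent_iff'.1 hLI (h.support.subtype (· ∈ O))
    (fun t => coeff (t : Fin d →₀ ℕ) h) ?_
  · ext β
    by_cases hβ : β ∈ h.support
    · exact key ⟨β, hsupp hβ⟩ (Finset.mem_subtype.2 hβ)
    · simpa using MvPolynomial.notMem_support_iff.1 hβ
  · have : ∑ t ∈ h.support.subtype (· ∈ O),
        (coeff (t : Fin d →₀ ℕ) h) • Ideal.Quotient.mk I (monomial (t : Fin d →₀ ℕ) (1 : F))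
        = Ideal.Quotient.mk I h := by
      rw [Finset.sum_subtype_eq_sum_filter
          (fun t => coeff t h • Ideal.Quotient.mk I (monomial t (1 : F))),
        Finset.filter_true_of_mem (fun β hβ => hsupp hβ), mk_eq_sum_smul]
    rw [this, Ideal.Quotient.eq_zero_iff_mem.2 hI]
end LemA

section LemA2
variable {d : ℕ} {F : Type*} [Field F] {I : Ideal (MvPolynomial (Fin d) F)}

lemma escalier_linearIndependent (o : MonOrder d) (I : Ideal (MvPolynomial (Fin d) F)) :
    LinearIndependent F
      (fun t : escalier o I => Ideal.Quotient.mk I (monomial (t : Fin d →₀ ℕ) (1 : F))) := by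
  classical
  rw [linearIndependent_iff]
  intro l hl
  set p := Finsupp.linearCombination F
    (fun t : escalier o I => monomial (t : Fin d →₀ ℕ) (1 : F)) l with hp
  have hmk : Ideal.Quotient.mk I p = 0 := by
    have := Finsupp.apply_linearCombination F (Ideal.Quotient.mkₐ F I).toLinearMap
      (fun t : escalier o I => monomial (t : Fin d →₀ ℕ) (1 : F)) l
    simp only [AlgHom.toLinearMap_apply, Ideal.Quotient.mkₐ_eq_mk] at this
    rw [← hp] at this
    rw [this]
    exact hl
  have hpI : p ∈ I := Ideal.Quotient.eq_zero_iff_mem.1 hmk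
  have hsupp : ↑p.support ⊆ escalier o I := by
    intro β hβ
    rw [hp, Finsupp.linearCombination_apply] at hβ
    have := MvPolynomial.support_sum (s := l.support)
      (f := fun t => l t • monomial (t : Fin d →₀ ℕ) (1 : F)) hβ
    obtain ⟨t, _, hmem⟩ := Finset.mem_biUnion.1 this
    have : β ∈ (monomial (t : Fin d →₀ ℕ) (l t)).support := by
      simp only [MvPolynomial.smul_monomial, smul_eq_mul, mul_one] at hmem
      exact hmem
    rw [MvPolynomial.support_monomial] at this
    split_ifs at this with h
    · exact absurd this (Finset.notMem_empty β)
    · rw [Finset.mem_singleton] at this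
      exact this ▸ t.2
  by_cases hp0 : p = 0
  · have hLIm : LinearIndependent F
        (fun t : escalier o I => monomial (t : Fin d →₀ ℕ) (1 : F)) := by
      have := (MvPolynomial.basisMonomials (Fin d) F).linearIndependent
      rw [MvPolynomial.coe_basisMonomials] at this
      exact this.comp _ Subtype.val_injective
    exact linearIndependent_iff.1 hLIm l (hp ▸ hp0)
  · obtain ⟨α, hα⟩ := exists_isLM o hp0
    exact absurd (hsupp hα.1) (isLM_notMem_escalier hpI hp0 hα)

lemma escalier_span (o : MonOrder d) (I : Ideal (MvPolynomial (Fin d) F)) :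
    Submodule.span F (Set.range fun t : escalier o I =>
      Ideal.Quotient.mk I (monomial (t : Fin d →₀ ℕ) (1 : F))) = ⊤ := by
  classical
  set S := Submodule.span F (Set.range fun t : escalier o I =>
      Ideal.Quotient.mk I (monomial (t : Fin d →₀ ℕ) (1 : F))) with hS
  rw [Submodule.eq_top_iff']
  have key : ∀ α (f : MvPolynomial (Fin d) F), o.IsLM f α → Ideal.Quotient.mk I f ∈ S := by
    intro α
    refine (olt_wf o).induction
      (C := fun α => ∀ f : MvPolynomial (Fin d) F, o.IsLM f α → Ideal.Quotient.mk I f ∈ S)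
      α ?_
    clear α
    intro α IH f hLM
    by_cases hα : α ∈ escalier o I
    · set c := coeff α f with hc
      have hc0 : c ≠ 0 := MvPolynomial.mem_support_iff.1 hLM.1
      set f' := f - monomial α c with hf'
      have hsupp : ∀ β ∈ f'.support, β ∈ f.support ∧ β ≠ α := by
        intro β hβ
        have hcoeff : coeff β f' ≠ 0 := MvPolynomial.mem_support_iff.1 hβ
        by_cases hβα : β = α
        · subst hβα
          exact absurd (by simp [hf', hc, MvPolynomial.coeff_sub, MvPolynomial.coeff_monomial])
            hcoeff
        · refine ⟨MvPolynomial.mem_support_iff.2 ?_, hβα⟩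
          intro h0
          apply hcoeff
          simp [hf', MvPolynomial.coeff_sub, MvPolynomial.coeff_monomial, h0,
            Ne.symm hβα]
      have hmkf' : Ideal.Quotient.mk I f' ∈ S := by
        by_cases h0 : f' = 0
        · simp [h0]
        · obtain ⟨β, hβ⟩ := exists_isLM o h0
          have hβf := hsupp β hβ.1
          exact IH β (olt_of_ole_ne (hLM.2 β hβf.1) hβf.2) f' hβ
      have heq : Ideal.Quotient.mk I f = Ideal.Quotient.mk I f'
          + c • Ideal.Quotient.mk I (monomial α (1 : F)) := by
        rw [smul_mk_monomial, ← (Ideal.Quotient.mk I).map_add f' (monomial α c), hf',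
          sub_add_cancel]
      rw [heq]
      exact S.add_mem hmkf' (S.smul_mem _ (Submodule.subset_span ⟨⟨α, hα⟩, rfl⟩))
    · obtain ⟨g, hgI, hg0, γ, hγLM, hγle⟩ := not_mem_escalier_iff.1 hα
      set b := coeff γ g with hb
      have hb0 : b ≠ 0 := MvPolynomial.mem_support_iff.1 hγLM.1
      set c := coeff α f with hc
      set δ := α - γ with hδ
      have hδγ : γ + δ = α := add_tsub_cancel_of_le hγle
      set q := monomial δ (c / b) * g with hq
      set f' := f - q with hf'
      have hqI : q ∈ I := I.mul_mem_left _ hgI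
      have hmkeq : Ideal.Quotient.mk I f' = Ideal.Quotient.mk I f := by
        rw [hf', map_sub, Ideal.Quotient.eq_zero_iff_mem.2 hqI, sub_zero]
      have hcoeffq : coeff α q = c := by
        have : coeff (δ + γ) (monomial δ (c / b) * g) = (c / b) * coeff γ g :=
          MvPolynomial.coeff_monomial_mul _ _ _ _
        rw [add_comm δ γ, hδγ] at this
        rw [hq, this, ← hb, div_mul_cancel₀ c hb0]
      have hcoeffα : coeff α f' = 0 := by
        rw [hf', MvPolynomial.coeff_sub, hcoeffq, ← hc, sub_self]
      have hsupp : ∀ β ∈ f'.support, olt o β α := by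
        intro β hβ
        have hβ0 : coeff β f' ≠ 0 := MvPolynomial.mem_support_iff.1 hβ
        have hβα : β ≠ α := fun h => hβ0 (h ▸ hcoeffα)
        have hmem : β ∈ f.support ∨ β ∈ q.support := by
          by_contra hcon
          push_neg at hcon
          apply hβ0
          rw [hf', MvPolynomial.coeff_sub, MvPolynomial.notMem_support_iff.1 hcon.1,
            MvPolynomial.notMem_support_iff.1 hcon.2, sub_zero]
        rcases hmem with hmem | hmem
        · exact olt_of_ole_ne (hLM.2 β hmem) hβα
        · have := MvPolynomial.support_mul _ _ hmem
          rw [Finset.mem_add] at this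
          obtain ⟨a, ha, b', hb', rfl⟩ := this
          rw [MvPolynomial.support_monomial] at ha
          split_ifs at ha with hcb
          · exact absurd ha (Finset.notMem_empty _)
          · rw [Finset.mem_singleton] at ha
            subst ha
            have h1 : ole o (b' + δ) (γ + δ) := oadd_le_add (hγLM.2 b' hb') δ
            rw [hδγ] at h1
            rw [add_comm δ b']
            exact olt_of_ole_ne h1 (by rwa [add_comm δ b'] at hβα)
      by_cases h0 : f' = 0
      · rw [← hmkeq, h0, map_zero]
        exact S.zero_mem
      · obtain ⟨β, hβ⟩ := exists_isLM o h0
        rw [← hmkeq]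
        exact IH β (hsupp β hβ.1) f' hβ
  intro x
  obtain ⟨f, rfl⟩ := Ideal.Quotient.mk_surjective x
  by_cases hf : f = 0
  · rw [hf, map_zero]; exact S.zero_mem
  · obtain ⟨α, hα⟩ := exists_isLM o hf
    exact key α f hα

lemma escalier_isMOQB (o : MonOrder d) (I : Ideal (MvPolynomial (Fin d) F))
    (hzero : FiniteDimensional F (MvPolynomial (Fin d) F ⧸ I)) :
    IsMOQB I (escalier o I) := by
  have hLI := escalier_linearIndependent (F := F) o I
  have : Finite (escalier o I) := hLI.finite
  exact ⟨Set.toFinite _, escalier_lowerSet, hLI, escalier_span o I⟩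

end LemA2

section LemB
variable {d : ℕ} {F : Type*} [Field F] {I : Ideal (MvPolynomial (Fin d) F)}

lemma IsMOQB.ncard_eq {O : Set (Fin d →₀ ℕ)} (hO : IsMOQB I O) :
    O.ncard = Module.finrank F (MvPolynomial (Fin d) F ⧸ I) := by
  classical
  let b : Module.Basis O F (MvPolynomial (Fin d) F ⧸ I) :=
    Module.Basis.mk hO.2.2.1 (le_of_eq hO.2.2.2.symm)
  rw [Module.finrank_eq_nat_card_basis b, Nat.card_coe_set_eq]

set_option synthInstance.maxHeartbeats 1000000 in
set_option maxHeartbeats 1000000 in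
lemma moqb_eq_escalier (o₀ : MonOrder d) (e : Fin d → MonOrder d)
    (helim : ∀ i, (e i).IsElimFor i)
    (hN : ∀ i, escalier (e i) I = escalier o₀ I)
    (hzero : FiniteDimensional F (MvPolynomial (Fin d) F ⧸ I))
    {O : Set (Fin d →₀ ℕ)} (hO : IsMOQB I O) : O = escalier o₀ I := by
  classical
  have hNM : IsMOQB I (escalier o₀ I) := escalier_isMOQB o₀ I hzero
  have hsub : O ⊆ escalier o₀ I := by
    intro u huO
    by_contra huN
    haveI : Fintype (escalier o₀ I) := hNM.1.fintype
    have hx : Ideal.Quotient.mk I (monomial u (1 : F)) ∈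
        Submodule.span F (Set.range fun t : escalier o₀ I =>
          Ideal.Quotient.mk I (monomial (t : Fin d →₀ ℕ) (1 : F))) := by
      rw [hNM.2.2.2]; trivial
    obtain ⟨cf, hcf⟩ := (Submodule.mem_span_range_iff_exists_fun F).1 hx
    set p : MvPolynomial (Fin d) F :=
      ∑ t : escalier o₀ I, monomial (t : Fin d →₀ ℕ) (cf t) with hpdef
    have hmkp : Ideal.Quotient.mk I p = Ideal.Quotient.mk I (monomial u (1 : F)) := by
      rw [hpdef, map_sum, ← hcf]
      exact Finset.sum_congr rfl fun t _ => (smul_mk_monomial _ _).symm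
    set h : MvPolynomial (Fin d) F := monomial u (1 : F) - p with hhdef
    have hhI : h ∈ I := by
      rw [← Ideal.Quotient.eq_zero_iff_mem, hhdef, map_sub, hmkp, sub_self]
    have hcoeffp : ∀ β, β ∉ escalier o₀ I → coeff β p = 0 := by
      intro β hβ
      rw [hpdef, MvPolynomial.coeff_sum]
      refine Finset.sum_eq_zero fun t _ => ?_
      rw [MvPolynomial.coeff_monomial]
      have : (t : Fin d →₀ ℕ) ≠ β := fun hh => hβ (hh ▸ t.2)
      simp [this]
    have hcu : coeff u h = 1 := by
      rw [hhdef, MvPolynomial.coeff_sub, MvPolynomial.coeff_monomial, hcoeffp u huN, sub_zero,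
        if_pos rfl]
    have hh0 : h ≠ 0 := fun hz => one_ne_zero (α := F) (by rw [← hcu, hz, MvPolynomial.coeff_zero])
    have hsupph : ∀ β ∈ h.support, β = u ∨ β ∈ escalier o₀ I := by
      intro β hβ
      by_cases hβu : β = u
      · exact Or.inl hβu
      · refine Or.inr ?_
        by_contra hβN
        apply MvPolynomial.mem_support_iff.1 hβ
        rw [hhdef, MvPolynomial.coeff_sub, MvPolynomial.coeff_monomial, if_neg (Ne.symm hβu),
          hcoeffp β hβN, sub_zero]
    have hdvd : ∀ β ∈ h.support, β ≤ u := by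
      intro β hβ
      rw [Finsupp.le_def]
      intro i
      by_contra hlt
      push_neg at hlt
      obtain ⟨α, hα⟩ := exists_isLM (e i) hh0
      have hαu : α = u := by
        rcases hsupph α hα.1 with h1 | h1
        · exact h1
        · exact absurd ((hN i).symm ▸ h1) (isLM_notMem_escalier hhI hh0 hα)
      have h2 : ole (e i) β u := hαu ▸ hα.2 β hβ
      have h3 : olt (e i) u β := olt_of_apply_lt (helim i) hlt
      exact (olt_iff.1 h3).2 h2
    have hsuppO : ↑h.support ⊆ O := fun β hβ => hO.2.1 (hdvd β hβ) huO
    exact hh0 (eq_zero_of_supp_subset hO.2.2.1 hsuppO hhI)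
  exact Set.eq_of_subset_of_ncard_le hsub (by rw [hO.ncard_eq, hNM.ncard_eq]) hNM.1

end LemB

def trivMonOrder : MonOrder 0 where
  toLinearOrder :=
    haveI : Subsingleton (Fin 0 →₀ ℕ) := ⟨fun a b => Finsupp.ext fun i => i.elim0⟩
    LinearOrder.lift' (fun _ => (0 : ℕ)) fun a b _ => Subsingleton.elim a b
  zero_le := fun _ => Nat.le_refl 0
  add_le_add := fun _ _ _ _ => Nat.le_refl 0



/-- Theorem 3.1. Let `I` be a zero-dimensional ideal and, for each `i`, let
`≺ᵢ` be an elimination order for `xᵢ`. The following are equivalent: (1) `I` has a unique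
monomial order quotient basis; (2) any two monomial orders yield the same Gröbner éscalier of
`I`; (3) the `d` Gröbner éscaliers of `I` w.r.t. `≺₁, …, ≺_d` are all identical. -/
theorem stmt3 {F : Type*} [Field F] [CharZero F] {d : ℕ}
    (I : Ideal (MvPolynomial (Fin d) F))
    (hzero : FiniteDimensional F (MvPolynomial (Fin d) F ⧸ I))
    (e : Fin d → MonOrder d) (helim : ∀ i : Fin d, (e i).IsElimFor i) :
    List.TFAE
      [∃! O : Set (Fin d →₀ ℕ), IsMOQB I O,
       ∀ o o' : MonOrder d, escalier o I = escalier o' I,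
       ∀ i j : Fin d, escalier (e i) I = escalier (e j) I] := by
  tfae_have 1 → 2 := by
    intro h1 o o'
    obtain ⟨O, _, huniq⟩ := h1
    rw [huniq _ (escalier_isMOQB o I hzero), huniq _ (escalier_isMOQB o' I hzero)]
  tfae_have 2 → 3 := fun h2 i j => h2 (e i) (e j)
  tfae_have 3 → 1 := by
    intro h3
    rcases Nat.eq_zero_or_pos d with hd | hd
    · subst hd
      exact ⟨escalier trivMonOrder I, escalier_isMOQB _ I hzero,
        fun O hO => moqb_eq_escalier trivMonOrder e helim (fun i => i.elim0) hzero hO⟩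
    · exact ⟨escalier (e ⟨0, hd⟩) I, escalier_isMOQB _ I hzero,
        fun O hO => moqb_eq_escalier (e ⟨0, hd⟩) e helim (fun i => h3 i ⟨0, hd⟩) hzero hO⟩
  tfae_finish
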